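/- Let p be a prime and let m < n be positive integers. Then every γ ∈ SL₂(ℤ/pⁿℤ) with γ ≡ I (mod p^{min(2m,n)}) (i.e. all entries of γ − I are divisible by p^{min(2m,n)}) can be written as γ = u₁ ℓ₁ u₂ ℓ₂ u₃, where each uᵢ is an upper unitriangular matrix (1, b; 0, 1) with b ∈ p^m ℤ/pⁿℤ and each ℓᵢ is a lower unitriangular matrix (1, 0; c, 1) with c ∈ p^m ℤ/pⁿℤ. -/

import Mathlib

open Matrix

/-- An upper unitriangular matrix in `SL₂(ℤ/pⁿℤ)` whose off–diagonal entry lies in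
`p^m ℤ/pⁿℤ`. -/
def IsUpperUniPow (p n m : ℕ) (u : Matrix.SpecialLinearGroup (Fin 2) (ZMod (p ^ n))) : Prop :=
  (u : Matrix (Fin 2) (Fin 2) (ZMod (p ^ n))) 0 0 = 1 ∧
  (u : Matrix (Fin 2) (Fin 2) (ZMod (p ^ n))) 1 1 = 1 ∧
  (u : Matrix (Fin 2) (Fin 2) (ZMod (p ^ n))) 1 0 = 0 ∧
  ((p : ZMod (p ^ n)) ^ m) ∣ (u : Matrix (Fin 2) (Fin 2) (ZMod (p ^ n))) 0 1

/-- A lower unitriangular matrix in `SL₂(ℤ/pⁿℤ)` whose off–diagonal entry lies in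
`p^m ℤ/pⁿℤ`. -/
def IsLowerUniPow (p n m : ℕ) (l : Matrix.SpecialLinearGroup (Fin 2) (ZMod (p ^ n))) : Prop :=
  (l : Matrix (Fin 2) (Fin 2) (ZMod (p ^ n))) 0 0 = 1 ∧
  (l : Matrix (Fin 2) (Fin 2) (ZMod (p ^ n))) 1 1 = 1 ∧
  (l : Matrix (Fin 2) (Fin 2) (ZMod (p ^ n))) 0 1 = 0 ∧
  ((p : ZMod (p ^ n)) ^ m) ∣ (l : Matrix (Fin 2) (Fin 2) (ZMod (p ^ n))) 1 0

theorem key_decomp {R : Type*} [CommRing R] (Q a a' α β δ c d : R) (h1 : a = 1 + Q^2 * α)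
    (ha : a * a' = 1) (hc : c = Q^2 * δ) (hd : a * d - (Q^2 * β) * c = 1) :
    !![a, Q^2 * β; c, d] = !![1, Q*α;0,1] * !![1,0;Q*1,1] * !![1, Q*(-(α*a'));0,1] *
      !![1,0;Q*((Q*δ-1)*a),1] * !![1, Q*(Q*β*a');0,1] := by
  subst h1 hc
  ext i j
  fin_cases i <;> fin_cases j <;> simp [Matrix.mul_apply, Fin.sum_univ_succ]
  · linear_combination (Q^2*α*(Q*δ-1)*(1+Q^2*α)) * ha
  · linear_combination (Q*α*(Q*(Q*δ-1)*(1+Q^2*α)*a'*(Q^2*β) + 1) - Q^2*β) * ha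
  · linear_combination (Q^3*α*(Q*δ-1)) * ha
  · linear_combination (1 + Q^3*α*(Q*δ-1)*a'*(Q^2*β) - d) * ha + a' * hd

/-- Every element of `SL₂(ℤ/pⁿℤ)` congruent to the identity
mod `p^{min(2m,n)}` is a product `u₁ℓ₁u₂ℓ₂u₃` of unitriangular matrices with
off-diagonal entries divisible by `p^m`. -/
theorem statement6 (p : ℕ) (hp : p.Prime) (m n : ℕ) (hm : 0 < m) (hmn : m < n)
    (γ : Matrix.SpecialLinearGroup (Fin 2) (ZMod (p ^ n)))
    (hγ : ∀ i j, ((p : ZMod (p ^ n)) ^ min (2 * m) n) ∣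
      ((γ : Matrix (Fin 2) (Fin 2) (ZMod (p ^ n))) i j -
        (1 : Matrix (Fin 2) (Fin 2) (ZMod (p ^ n))) i j)) :
    ∃ u₁ u₂ u₃ l₁ l₂ : Matrix.SpecialLinearGroup (Fin 2) (ZMod (p ^ n)),
      IsUpperUniPow p n m u₁ ∧ IsUpperUniPow p n m u₂ ∧ IsUpperUniPow p n m u₃ ∧
      IsLowerUniPow p n m l₁ ∧ IsLowerUniPow p n m l₂ ∧
      γ = u₁ * l₁ * u₂ * l₂ * u₃ := by
  set R := ZMod (p ^ n)
  have hpn : (p : R) ^ n = 0 := by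
    rw [← Nat.cast_pow]; exact ZMod.natCast_self _
  have hdvd : ∀ x : R, ((p : R) ^ min (2 * m) n) ∣ x → ((p : R) ^ (2 * m)) ∣ x := by
    intro x hx
    rcases Nat.le_total (2 * m) n with h | h
    · rwa [min_eq_left h] at hx
    · rw [min_eq_right h, hpn, zero_dvd_iff] at hx
      rw [hx]; exact dvd_zero _
  set a := (γ : Matrix (Fin 2) (Fin 2) R) 0 0 with ha_def
  set b := (γ : Matrix (Fin 2) (Fin 2) R) 0 1 with hb_def
  set c := (γ : Matrix (Fin 2) (Fin 2) R) 1 0 with hc_def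
  set d := (γ : Matrix (Fin 2) (Fin 2) R) 1 1 with hd_def
  set Q : R := (p : R) ^ m with hQ_def
  have hQ2 : (p : R) ^ (2 * m) = Q ^ 2 := by rw [hQ_def, ← pow_mul]; ring_nf
  obtain ⟨α, hα⟩ := hdvd _ (hγ 0 0)
  obtain ⟨β, hβ⟩ := hdvd _ (hγ 0 1)
  obtain ⟨δ, hδ⟩ := hdvd _ (hγ 1 0)
  rw [Matrix.one_apply_eq, hQ2] at hα
  rw [show (1 : Matrix (Fin 2) (Fin 2) R) 0 1 = 0 from Matrix.one_apply_ne (by decide),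
    sub_zero, hQ2] at hβ
  rw [show (1 : Matrix (Fin 2) (Fin 2) R) 1 0 = 0 from Matrix.one_apply_ne (by decide),
    sub_zero, hQ2] at hδ
  have h1 : a = 1 + Q ^ 2 * α := by linear_combination hα
  have hnil : IsNilpotent (Q ^ 2 * α) := by
    refine ⟨n, ?_⟩
    have h2 : ((p : R) ^ m) ^ 2 = ((p : R) ^ n) ^ (2 * m * n) * 1 ∨ True := Or.inr trivial
    rw [mul_pow, hQ_def, show (((p:R) ^ m) ^ 2) ^ n = ((p:R) ^ n) ^ (2 * m) by
      rw [← pow_mul, ← pow_mul]; ring_nf; rw [← pow_mul]; ring_nf, hpn, zero_pow (by omega), zero_mul]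
  have hunit : IsUnit a := by
    rw [h1]
    exact hnil.isUnit_add_left_of_commute isUnit_one (Commute.all _ _)
  obtain ⟨a', ha⟩ := isUnit_iff_exists_inv.mp hunit
  have hdet : a * d - b * c = 1 := by
    have h := γ.prop
    rw [Matrix.det_fin_two] at h
    linear_combination h
  have hb2 : b = Q ^ 2 * β := hβ
  refine ⟨⟨!![1, Q*α; 0, 1], by simp [Matrix.det_fin_two_of]⟩,
    ⟨!![1, Q*(-(α*a')); 0, 1], by simp [Matrix.det_fin_two_of]⟩,
    ⟨!![1, Q*(Q*β*a'); 0, 1], by simp [Matrix.det_fin_two_of]⟩,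
    ⟨!![1, 0; Q*1, 1], by simp [Matrix.det_fin_two_of]⟩,
    ⟨!![1, 0; Q*((Q*δ-1)*a), 1], by simp [Matrix.det_fin_two_of]⟩,
    ?_, ?_, ?_, ?_, ?_, ?_⟩
  · exact ⟨by simp, by simp, by simp, ⟨α, by simp [hQ_def]⟩⟩
  · exact ⟨by simp, by simp, by simp, ⟨-(α*a'), by simp [hQ_def]; ring⟩⟩
  · exact ⟨by simp, by simp, by simp, ⟨Q*β*a', by simp [hQ_def]⟩⟩
  · exact ⟨by simp, by simp, by simp, ⟨1, by simp [hQ_def]⟩⟩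
  · exact ⟨by simp, by simp, by simp, ⟨(Q*δ-1)*a, by simp [hQ_def]⟩⟩
  · apply Subtype.ext
    show (γ : Matrix (Fin 2) (Fin 2) R) = _
    rw [Matrix.eta_fin_two (γ : Matrix (Fin 2) (Fin 2) R)]
    rw [← ha_def, ← hb_def, ← hc_def, ← hd_def, hb2]
    exact key_decomp Q a a' α β δ c d h1 ha (by linear_combination hδ)
      (by rw [← hb2]; exact hdet)
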